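/- Let X be a Markov random field on 𝒢=(V,E) and let Y_i=g_i(X_i) for each i∈V. If for every vertex i∈V the conditional entropies satisfy H(Y_i | Y_{N_i}) = H(Y_i | X_{N_i}), then Y=(Y_i, i∈V) is a Markov random field on 𝒢. -/

import Mathlib

open scoped Classical

/-!
Basic framework: tuples of finitely-valued random variables indexed by the
vertex set `Fin N`, joint PMFs as real-valued functions, pushforward
distributions, Shannon entropy, conditional entropy, marginals, and Markov
random fields on simple graphs.
-/

variable {N : ℕ}

/-- The distribution of the discrete random variable `f` when the underlying
configuration `x` is distributed according to the joint PMF `p`. -/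
noncomputable def dist {𝒳 : Fin N → Type*} [∀ i, Fintype (𝒳 i)] {β : Type*}
    (p : (∀ i, 𝒳 i) → ℝ) (f : (∀ i, 𝒳 i) → β) : β → ℝ :=
  fun b => ∑ x : ∀ i, 𝒳 i, if f x = b then p x else 0

/-- Shannon entropy `H(f)` of the random variable `f` under the joint PMF `p`. -/
noncomputable def ent {𝒳 : Fin N → Type*} [∀ i, Fintype (𝒳 i)] {β : Type*} [Fintype β]
    (p : (∀ i, 𝒳 i) → ℝ) (f : (∀ i, 𝒳 i) → β) : ℝ :=
  ∑ b : β, Real.negMulLog (dist p f b)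

/-- Conditional Shannon entropy `H(f | h) := H(f, h) - H(h)`. -/
noncomputable def condEnt {𝒳 : Fin N → Type*} [∀ i, Fintype (𝒳 i)] {β γ : Type*}
    [Fintype β] [Fintype γ]
    (p : (∀ i, 𝒳 i) → ℝ) (f : (∀ i, 𝒳 i) → β) (h : (∀ i, 𝒳 i) → γ) : ℝ :=
  ent p (fun x => (f x, h x)) - ent p h

/-- Restriction of a configuration to the coordinates in `A` (i.e. `x_A`). -/
def restr {𝒳 : Fin N → Type*} (A : Finset (Fin N)) (x : ∀ i, 𝒳 i) : ∀ i : A, 𝒳 i.1 :=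
  fun i => x i.1

/-- The marginal PMF of the coordinates in `A`, evaluated at `x_A`. -/
noncomputable def margin {𝒳 : Fin N → Type*} [∀ i, Fintype (𝒳 i)]
    (p : (∀ i, 𝒳 i) → ℝ) (A : Finset (Fin N)) (x : ∀ i, 𝒳 i) : ℝ :=
  dist p (restr A) (restr A x)

/-- The neighbors `N_i` of vertex `i` in the graph `G`. -/
noncomputable def nbr (G : SimpleGraph (Fin N)) (i : Fin N) : Finset (Fin N) :=
  Finset.univ.filter (fun j => G.Adj i j)

/-- `p` is (the joint PMF of) a Markov random field on `G`: for every vertex `i`,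
the conditional PMF of `X_i` given `X_{V∖{i}}` equals the conditional PMF of `X_i`
given `X_{N_i}`, expressed in cross-multiplied form (conditional independence of
`X_i` and `X_{V∖({i}∪N_i)}` given `X_{N_i}`). -/
def IsMRF {𝒳 : Fin N → Type*} [∀ i, Fintype (𝒳 i)]
    (G : SimpleGraph (Fin N)) (p : (∀ i, 𝒳 i) → ℝ) : Prop :=
  ∀ (i : Fin N) (x : ∀ j, 𝒳 j),
    p x * margin p (nbr G i) x
      = margin p (Finset.univ.erase i) x * margin p (insert i (nbr G i)) x

/-- Coordinate-wise application of the functions `g_i`: `g(x) = (g_i(x_i), i ∈ V)`. -/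
def gmap {𝒳 𝒴 : Fin N → Type*} (g : ∀ i, 𝒳 i → 𝒴 i) (x : ∀ i, 𝒳 i) : ∀ i, 𝒴 i :=
  fun i => g i (x i)

/-- The set `𝒞` of cliques of `G`: subsets all of whose two-element subsets are
edges (this includes all singletons). -/
noncomputable def cliques (G : SimpleGraph (Fin N)) : Finset (Finset (Fin N)) :=
  Finset.univ.filter (fun C => G.IsClique (C : Set (Fin N)))

/-- `ψ` (a potential defined on all of `𝒳`) depends only on the coordinates in `C`. -/
def localTo {𝒳 : Fin N → Type*} (C : Finset (Fin N)) (ψ : (∀ i, 𝒳 i) → ℝ) : Prop :=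
  ∀ x x' : ∀ i, 𝒳 i, (∀ i ∈ C, x i = x' i) → ψ x = ψ x'

/-- The potential `ψ` depends on the coordinate `x_i` only via `y_i = g_i(x_i)`:
changing `x_i` within a preimage `g_i⁻¹(y_i)` does not change the value of `ψ`.
The negation of this is "`ψ` strictly depends on `x_i`". -/
def onlyVia {𝒳 𝒴 : Fin N → Type*} (g : ∀ i, 𝒳 i → 𝒴 i) (i : Fin N)
    (ψ : (∀ j, 𝒳 j) → ℝ) : Prop :=
  ∀ (x : ∀ j, 𝒳 j) (xi' : 𝒳 i), g i xi' = g i (x i) →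
    ψ (Function.update x i xi') = ψ x

section AuxBasic

variable {𝒳 : Fin N → Type*} [∀ i, Fintype (𝒳 i)]

lemma dist_congr' {β β' : Type*} (p : (∀ i, 𝒳 i) → ℝ) {f : (∀ i, 𝒳 i) → β}
    {f' : (∀ i, 𝒳 i) → β'} {b : β} {b' : β'} (h : ∀ x, f x = b ↔ f' x = b') :
    dist p f b = dist p f' b' :=
  Finset.sum_congr rfl fun x _ => by rw [if_congr (h x) rfl rfl]

lemma dist_nonneg' {β : Type*} {p : (∀ i, 𝒳 i) → ℝ} (hnn : ∀ x, 0 ≤ p x)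
    (f : (∀ i, 𝒳 i) → β) (b : β) : 0 ≤ dist p f b :=
  Finset.sum_nonneg fun x _ => by split <;> simp [hnn x]

lemma sum_dist {β : Type*} [Fintype β] (p : (∀ i, 𝒳 i) → ℝ) (f : (∀ i, 𝒳 i) → β) :
    ∑ b : β, dist p f b = ∑ x : ∀ i, 𝒳 i, p x := by
  unfold _root_.dist
  rw [Finset.sum_comm]
  exact Finset.sum_congr rfl fun x _ => by simp

lemma exists_of_dist_ne_zero {β : Type*} {p : (∀ i, 𝒳 i) → ℝ} {f : (∀ i, 𝒳 i) → β}
    {b : β} (h : dist p f b ≠ 0) : ∃ x, f x = b := by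
  by_contra hc
  push_neg at hc
  exact h (Finset.sum_eq_zero fun x _ => by simp [hc x])

lemma ite_sum_zero {c : Prop} [Decidable c] {α : Type*} (s : Finset α) (f : α → ℝ) :
    (if c then ∑ x ∈ s, f x else 0) = ∑ x ∈ s, if c then f x else 0 := by
  split <;> simp

lemma dist_dist {𝒴 : Fin N → Type*} [∀ i, Fintype (𝒴 i)] {β : Type*}
    (p : (∀ i, 𝒳 i) → ℝ) (Y : (∀ i, 𝒳 i) → ∀ i, 𝒴 i) (h : (∀ i, 𝒴 i) → β) (b : β) :
    dist (dist p Y) h b = dist p (fun x => h (Y x)) b := by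
  unfold _root_.dist
  simp only [ite_sum_zero]
  rw [Finset.sum_comm]
  refine Finset.sum_congr rfl fun x _ => ?_
  simp only [← ite_and]
  refine (Finset.sum_eq_single_of_mem (Y x) (Finset.mem_univ _) ?_).trans ?_
  · intro y _ hy
    exact if_neg fun hc => hy hc.2.symm
  · by_cases hb : h (Y x) = b <;> simp [hb]


lemma sum_dist_pair_right {β γ : Type*} [Fintype β] (p : (∀ i, 𝒳 i) → ℝ)
    (f : (∀ i, 𝒳 i) → β) (h : (∀ i, 𝒳 i) → γ) (c : γ) :
    ∑ a : β, dist p (fun x => (f x, h x)) (a, c) = dist p h c := by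
  unfold _root_.dist
  rw [Finset.sum_comm]
  refine Finset.sum_congr rfl fun x _ => ?_
  simp [Prod.ext_iff, ite_and]

lemma sum_dist_triple_right {β γ δ : Type*} [Fintype β] (p : (∀ i, 𝒳 i) → ℝ)
    (f : (∀ i, 𝒳 i) → β) (h : (∀ i, 𝒳 i) → γ) (k : (∀ i, 𝒳 i) → δ) (c : γ) (d : δ) :
    ∑ a : β, dist p (fun x => (f x, h x, k x)) (a, c, d)
      = dist p (fun x => (h x, k x)) (c, d) := by
  unfold _root_.dist
  rw [Finset.sum_comm]
  refine Finset.sum_congr rfl fun x _ => ?_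
  simp [Prod.ext_iff, ite_and]

lemma sum_dist_triple_last {β γ δ : Type*} [Fintype δ] (p : (∀ i, 𝒳 i) → ℝ)
    (f : (∀ i, 𝒳 i) → β) (h : (∀ i, 𝒳 i) → γ) (k : (∀ i, 𝒳 i) → δ) (a : β) (c : γ) :
    ∑ d : δ, dist p (fun x => (f x, h x, k x)) (a, c, d)
      = dist p (fun x => (f x, h x)) (a, c) := by
  unfold _root_.dist
  rw [Finset.sum_comm]
  refine Finset.sum_congr rfl fun x _ => ?_
  simp [Prod.ext_iff, ite_and]

end AuxBasic
section AuxGibbs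

open Real

/-- Pointwise Gibbs-type inequality with equality characterization. -/
lemma gibbs_term {J U V M : ℝ} (hJ0 : 0 ≤ J) (hJU : J ≤ U) (hJV : J ≤ V) (hUM : U ≤ M) :
    J - (if M = 0 then 0 else U * V / M)
        ≤ J * Real.log J - J * Real.log U - J * Real.log V + J * Real.log M ∧
      (J - (if M = 0 then 0 else U * V / M)
        = J * Real.log J - J * Real.log U - J * Real.log V + J * Real.log M
        ↔ J * M = U * V) := by
  have hU0 : 0 ≤ U := le_trans hJ0 hJU
  have hV0 : 0 ≤ V := le_trans hJ0 hJV
  have hM0 : 0 ≤ M := le_trans hU0 hUM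
  rcases eq_or_lt_of_le hJ0 with hJ | hJ
  · -- J = 0
    rw [← hJ]
    simp only [zero_mul, zero_sub, sub_zero, sub_self, neg_zero, add_zero, zero_add]
    by_cases hM : M = 0
    · have hU : U = 0 := le_antisymm (hM ▸ hUM) hU0
      simp [hM, hU]
    · rw [if_neg hM]
      have hMpos : 0 < M := lt_of_le_of_ne hM0 (Ne.symm hM)
      constructor
      · have : 0 ≤ U * V / M := by positivity
        linarith
      · constructor
        · intro hh
          have : U * V / M = 0 := by linarith
          have h2 := (div_eq_zero_iff.mp this).resolve_right hM
          linarith [h2]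
        · intro hh
          have : U * V = 0 := by linarith [hh]
          rw [this]
          simp [hM]
  · -- 0 < J
    have hUpos : 0 < U := lt_of_lt_of_le hJ hJU
    have hVpos : 0 < V := lt_of_lt_of_le hJ hJV
    have hMpos : 0 < M := lt_of_lt_of_le hUpos hUM
    rw [if_neg (ne_of_gt hMpos)]
    set x : ℝ := U * V / (J * M) with hxdef
    have hxpos : 0 < x := by positivity
    have hlx : Real.log x = Real.log U + Real.log V - Real.log J - Real.log M := by
      rw [hxdef, Real.log_div (by positivity) (by positivity),
        Real.log_mul (ne_of_gt hUpos) (ne_of_gt hVpos),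
        Real.log_mul (ne_of_gt hJ) (ne_of_gt hMpos)]
      ring
    have hR : J * Real.log J - J * Real.log U - J * Real.log V + J * Real.log M
        = -(J * Real.log x) := by rw [hlx]; ring
    have hJx : J * x = U * V / M := by
      rw [hxdef]; field_simp
    have hlog : Real.log x ≤ x - 1 := Real.log_le_sub_one_of_pos hxpos
    constructor
    · have := mul_le_mul_of_nonneg_left hlog hJ0
      rw [hR]
      nlinarith [hJx]
    · constructor
      · intro heq
        rw [hR] at heq
        have hlogeq : Real.log x = x - 1 := by
          have h1 : J * Real.log x = J * (x - 1) := by nlinarith [hJx]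
          exact mul_left_cancel₀ (ne_of_gt hJ) h1
        have hx1 : x = 1 := by
          by_contra hne
          exact absurd hlogeq (ne_of_lt (Real.log_lt_sub_one_of_pos hxpos hne))
        have : U * V = J * M := by
          rw [hxdef, div_eq_one_iff_eq (by positivity)] at hx1
          linarith [hx1]
        linarith [this]
      · intro hfac
        have hx1 : x = 1 := by
          rw [hxdef, div_eq_one_iff_eq (by positivity)]
          linarith [hfac]
        rw [hR, hx1]
        simp
        nlinarith [hJx, hx1]

/-- Abstract Gibbs / conditional mutual information nonnegativity with equality
characterization, for "marginal-consistent" arrays of reals. -/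
lemma gibbs_core {β γ δ : Type*} [Fintype β] [Fintype γ] [Fintype δ]
    (J : β → γ → δ → ℝ) (U : β → γ → ℝ) (V : γ → δ → ℝ) (M : γ → ℝ)
    (hJ0 : ∀ a c d, 0 ≤ J a c d)
    (hU : ∀ a c, ∑ d, J a c d = U a c)
    (hV : ∀ c d, ∑ a, J a c d = V c d)
    (hM : ∀ c, ∑ a, U a c = M c)
    (hM' : ∀ c, ∑ d, V c d = M c)
    (hsum1 : ∑ c, M c = 1) :
    0 ≤ ∑ a, ∑ c, ∑ d, (J a c d * Real.log (J a c d) - J a c d * Real.log (U a c)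
        - J a c d * Real.log (V c d) + J a c d * Real.log (M c)) ∧
      ((∑ a, ∑ c, ∑ d, (J a c d * Real.log (J a c d) - J a c d * Real.log (U a c)
        - J a c d * Real.log (V c d) + J a c d * Real.log (M c))) = 0
        ↔ ∀ a c d, J a c d * M c = U a c * V c d) := by
  have hU0 : ∀ a c, 0 ≤ U a c := fun a c => (hU a c) ▸ Finset.sum_nonneg fun d _ => hJ0 a c d
  have hV0 : ∀ c d, 0 ≤ V c d := fun c d => (hV c d) ▸ Finset.sum_nonneg fun a _ => hJ0 a c d
  have hM0 : ∀ c, 0 ≤ M c := fun c => (hM c) ▸ Finset.sum_nonneg fun a _ => hU0 a c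
  have hJU : ∀ a c d, J a c d ≤ U a c := fun a c d =>
    (hU a c) ▸ Finset.single_le_sum (fun d' _ => hJ0 a c d') (Finset.mem_univ d)
  have hJV : ∀ a c d, J a c d ≤ V c d := fun a c d =>
    (hV c d) ▸ Finset.single_le_sum (fun a' _ => hJ0 a' c d) (Finset.mem_univ a)
  have hUM : ∀ a c, U a c ≤ M c := fun a c =>
    (hM c) ▸ Finset.single_le_sum (fun a' _ => hU0 a' c) (Finset.mem_univ a)
  set T : β → γ → δ → ℝ := fun a c d =>
    J a c d * Real.log (J a c d) - J a c d * Real.log (U a c)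
      - J a c d * Real.log (V c d) + J a c d * Real.log (M c) with hT
  set R : β → γ → δ → ℝ := fun a c d => if M c = 0 then 0 else U a c * V c d / M c with hR
  have hkey : ∀ a c d, J a c d - R a c d ≤ T a c d ∧
      (J a c d - R a c d = T a c d ↔ J a c d * M c = U a c * V c d) := fun a c d =>
    gibbs_term (hJ0 a c d) (hJU a c d) (hJV a c d) (hUM a c)
  have hsumJ : ∑ a, ∑ c, ∑ d, J a c d = 1 := by
    have : ∀ a, ∑ c, ∑ d, J a c d = ∑ c, U a c := fun a =>
      Finset.sum_congr rfl fun c _ => hU a c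
    rw [Finset.sum_congr rfl fun a _ => this a, Finset.sum_comm]
    rw [Finset.sum_congr rfl fun c _ => hM c]
    exact hsum1
  have hsumR : ∑ a, ∑ c, ∑ d, R a c d = 1 := by
    have h1 : ∀ c, ∑ a, ∑ d, R a c d = M c := by
      intro c
      by_cases hMc : M c = 0
      · simp [hR, hMc]
      · have : ∀ a, ∑ d, R a c d = U a c * M c / M c := by
          intro a
          simp only [hR, if_neg hMc]
          rw [← Finset.sum_div, ← Finset.mul_sum, hM' c]
        rw [Finset.sum_congr rfl fun a _ => this a, ← Finset.sum_div, ← Finset.sum_mul, hM c]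
        field_simp
      
    rw [Finset.sum_comm, Finset.sum_congr rfl fun c _ => h1 c]
    exact hsum1
  have hdiff : ∑ a, ∑ c, ∑ d, (T a c d - (J a c d - R a c d)) =
      ∑ a, ∑ c, ∑ d, T a c d := by
    simp only [Finset.sum_sub_distrib]
    rw [hsumJ, hsumR]
    ring
  have hnn : ∀ a c d, 0 ≤ T a c d - (J a c d - R a c d) := fun a c d =>
    sub_nonneg.mpr (hkey a c d).1
  constructor
  · rw [← hdiff]
    exact Finset.sum_nonneg fun a _ => Finset.sum_nonneg fun c _ =>
      Finset.sum_nonneg fun d _ => hnn a c d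
  · constructor
    · intro h0
      intro a c d
      have hz : ∀ a c d, T a c d - (J a c d - R a c d) = 0 := by
        have hsz : ∑ a, ∑ c, ∑ d, (T a c d - (J a c d - R a c d)) = 0 := by
          rw [hdiff, h0]
        intro a c d
        have h1 : ∀ a ∈ Finset.univ, (0:ℝ) ≤ ∑ c, ∑ d, (T a c d - (J a c d - R a c d)) :=
          fun a _ => Finset.sum_nonneg fun c _ => Finset.sum_nonneg fun d _ => hnn a c d
        have h2 := (Finset.sum_eq_zero_iff_of_nonneg h1).mp hsz a (Finset.mem_univ a)
        have h3 : ∀ c ∈ Finset.univ, (0:ℝ) ≤ ∑ d, (T a c d - (J a c d - R a c d)) :=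
          fun c _ => Finset.sum_nonneg fun d _ => hnn a c d
        have h4 := (Finset.sum_eq_zero_iff_of_nonneg h3).mp h2 c (Finset.mem_univ c)
        exact (Finset.sum_eq_zero_iff_of_nonneg fun d _ => hnn a c d).mp h4 d (Finset.mem_univ d)
      exact (hkey a c d).2.mp (by linarith [hz a c d])
    · intro hfac
      have : ∀ a c d, T a c d = J a c d - R a c d := fun a c d =>
        ((hkey a c d).2.mpr (hfac a c d)).symm
      calc ∑ a, ∑ c, ∑ d, T a c d
          = ∑ a, ∑ c, ∑ d, (J a c d - R a c d) := by
            exact Finset.sum_congr rfl fun a _ => Finset.sum_congr rfl fun c _ =>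
              Finset.sum_congr rfl fun d _ => this a c d
        _ = 0 := by simp only [Finset.sum_sub_distrib]; rw [hsumJ, hsumR]; ring

end AuxGibbs
section AuxEnt

variable {𝒳 : Fin N → Type*} [∀ i, Fintype (𝒳 i)]

lemma sum_dist_pair_left {β γ : Type*} [Fintype γ] (p : (∀ i, 𝒳 i) → ℝ)
    (h : (∀ i, 𝒳 i) → β) (k : (∀ i, 𝒳 i) → γ) (c : β) :
    ∑ d : γ, dist p (fun x => (h x, k x)) (c, d) = dist p h c := by
  unfold _root_.dist
  rw [Finset.sum_comm]
  refine Finset.sum_congr rfl fun x _ => ?_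
  simp [Prod.ext_iff, ite_and]

/-- The difference of conditional entropies as an explicit triple sum. -/
lemma condEnt_diff_eq {β γ δ : Type*} [Fintype β] [Fintype γ] [Fintype δ]
    (p : (∀ i, 𝒳 i) → ℝ) (f : (∀ i, 𝒳 i) → β) (h : (∀ i, 𝒳 i) → γ) (k : (∀ i, 𝒳 i) → δ) :
    condEnt p f h - condEnt p f (fun x => (h x, k x))
      = ∑ a : β, ∑ c : γ, ∑ d : δ,
          (dist p (fun x => (f x, h x, k x)) (a, c, d)
              * Real.log (dist p (fun x => (f x, h x, k x)) (a, c, d))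
            - dist p (fun x => (f x, h x, k x)) (a, c, d)
              * Real.log (dist p (fun x => (f x, h x)) (a, c))
            - dist p (fun x => (f x, h x, k x)) (a, c, d)
              * Real.log (dist p (fun x => (h x, k x)) (c, d))
            + dist p (fun x => (f x, h x, k x)) (a, c, d)
              * Real.log (dist p h c)) := by
  have e1 : ∑ a : β, ∑ c : γ, ∑ d : δ, dist p (fun x => (f x, h x, k x)) (a, c, d)
      * Real.log (dist p (fun x => (f x, h x)) (a, c))
      = ∑ a : β, ∑ c : γ, dist p (fun x => (f x, h x)) (a, c)
          * Real.log (dist p (fun x => (f x, h x)) (a, c)) := by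
    refine Finset.sum_congr rfl fun a _ => Finset.sum_congr rfl fun c _ => ?_
    rw [← Finset.sum_mul, sum_dist_triple_last]
  have e2 : ∑ a : β, ∑ c : γ, ∑ d : δ, dist p (fun x => (f x, h x, k x)) (a, c, d)
      * Real.log (dist p (fun x => (h x, k x)) (c, d))
      = ∑ c : γ, ∑ d : δ, dist p (fun x => (h x, k x)) (c, d)
          * Real.log (dist p (fun x => (h x, k x)) (c, d)) := by
    rw [Finset.sum_comm]
    refine Finset.sum_congr rfl fun c _ => ?_
    rw [Finset.sum_comm]
    refine Finset.sum_congr rfl fun d _ => ?_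
    rw [← Finset.sum_mul, sum_dist_triple_right]
  have e3 : ∑ a : β, ∑ c : γ, ∑ d : δ, dist p (fun x => (f x, h x, k x)) (a, c, d)
      * Real.log (dist p h c)
      = ∑ c : γ, dist p h c * Real.log (dist p h c) := by
    rw [Finset.sum_comm]
    refine Finset.sum_congr rfl fun c _ => ?_
    have inner : ∀ a : β, ∑ d : δ, dist p (fun x => (f x, h x, k x)) (a, c, d)
        * Real.log (dist p h c)
        = dist p (fun x => (f x, h x)) (a, c) * Real.log (dist p h c) := fun a => by
      rw [← Finset.sum_mul, sum_dist_triple_last]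
    rw [Finset.sum_congr rfl fun a _ => inner a, ← Finset.sum_mul, sum_dist_pair_right]
  have hent3 : ent p (fun x => (f x, h x, k x))
      = ∑ a : β, ∑ c : γ, ∑ d : δ, Real.negMulLog
          (dist p (fun x => (f x, h x, k x)) (a, c, d)) := by
    unfold ent
    rw [Fintype.sum_prod_type]
    exact Finset.sum_congr rfl fun a _ => by rw [Fintype.sum_prod_type]
  have hent2 : ent p (fun x => (f x, h x))
      = ∑ a : β, ∑ c : γ, Real.negMulLog (dist p (fun x => (f x, h x)) (a, c)) := by
    unfold ent
    rw [Fintype.sum_prod_type]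
  have hentv : ent p (fun x => (h x, k x))
      = ∑ c : γ, ∑ d : δ, Real.negMulLog (dist p (fun x => (h x, k x)) (c, d)) := by
    unfold ent
    rw [Fintype.sum_prod_type]
  simp only [Finset.sum_sub_distrib, Finset.sum_add_distrib]
  rw [e1, e2, e3]
  show condEnt p f h - condEnt p f (fun x => (h x, k x)) = _
  unfold condEnt
  have hent1 : ent p h = ∑ c : γ, Real.negMulLog (dist p h c) := rfl
  rw [hent3, hent2, hentv, hent1]
  simp only [Real.negMulLog, neg_mul, Finset.sum_neg_distrib]
  ring

/-- Conditioning on extra information cannot increase conditional entropy,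
with equality exactly at conditional independence. -/
lemma condEnt_pair_le_and_eq {β γ δ : Type*} [Fintype β] [Fintype γ] [Fintype δ]
    {p : (∀ i, 𝒳 i) → ℝ} (hnn : ∀ x, 0 ≤ p x) (hsum : ∑ x : ∀ i, 𝒳 i, p x = 1)
    (f : (∀ i, 𝒳 i) → β) (h : (∀ i, 𝒳 i) → γ) (k : (∀ i, 𝒳 i) → δ) :
    condEnt p f (fun x => (h x, k x)) ≤ condEnt p f h ∧
      (condEnt p f (fun x => (h x, k x)) = condEnt p f h ↔
        ∀ (a : β) (c : γ) (d : δ),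
          dist p (fun x => (f x, h x, k x)) (a, c, d) * dist p h c
            = dist p (fun x => (f x, h x)) (a, c)
              * dist p (fun x => (h x, k x)) (c, d)) := by
  have hcore := gibbs_core
    (fun a c d => dist p (fun x => (f x, h x, k x)) (a, c, d))
    (fun a c => dist p (fun x => (f x, h x)) (a, c))
    (fun c d => dist p (fun x => (h x, k x)) (c, d))
    (fun c => dist p h c)
    (fun a c d => dist_nonneg' hnn _ _)
    (fun a c => sum_dist_triple_last p f h k a c)
    (fun c d => sum_dist_triple_right p f h k c d)
    (fun c => sum_dist_pair_right p f h c)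
    (fun c => sum_dist_pair_left p h k c)
    (by rw [sum_dist]; exact hsum)
  rw [← condEnt_diff_eq p f h k] at hcore
  obtain ⟨h1, h2⟩ := hcore
  constructor
  · linarith
  · constructor
    · intro he
      exact h2.mp (by linarith)
    · intro hfac
      have := h2.mpr hfac
      linarith

lemma ent_comp_inj {β β' : Type*} [Fintype β] [Fintype β'] (p : (∀ i, 𝒳 i) → ℝ)
    (f : (∀ i, 𝒳 i) → β) (e : β → β') (he : Function.Injective e) :
    ent p (fun x => e (f x)) = ent p f := by
  unfold ent
  have h0 : ∀ b' ∈ Finset.univ, b' ∉ Finset.univ.image e →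
      Real.negMulLog (dist p (fun x => e (f x)) b') = 0 := by
    intro b' _ hb'
    have : dist p (fun x => e (f x)) b' = 0 := by
      refine Finset.sum_eq_zero fun x _ => ?_
      rw [if_neg]
      intro hx
      exact hb' (Finset.mem_image.mpr ⟨f x, Finset.mem_univ _, hx⟩)
    rw [this, Real.negMulLog_zero]
  rw [← Finset.sum_subset (Finset.subset_univ (Finset.univ.image e)) h0]
  rw [Finset.sum_image (fun b _ b' _ hbb => he hbb)]
  refine Finset.sum_congr rfl fun b _ => ?_
  congr 1
  exact dist_congr' p fun x => he.eq_iff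

lemma condEnt_comp_inj {β γ γ' : Type*} [Fintype β] [Fintype γ] [Fintype γ']
    (p : (∀ i, 𝒳 i) → ℝ) (f : (∀ i, 𝒳 i) → β) (u : (∀ i, 𝒳 i) → γ) (e : γ → γ')
    (he : Function.Injective e) :
    condEnt p f (fun x => e (u x)) = condEnt p f u := by
  unfold condEnt
  rw [ent_comp_inj p u e he]
  congr 1
  have : (fun x => (f x, e (u x)))
      = fun x => (Prod.map id e) ((fun x => (f x, u x)) x) := rfl
  rw [this]
  exact ent_comp_inj p (fun x => (f x, u x)) (Prod.map id e)
    (Function.Injective.prodMap Function.injective_id he)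

/-- Conditioning on a function of `u` gives at least as much conditional entropy. -/
lemma condEnt_le_of_comp {β γ γ' : Type*} [Fintype β] [Fintype γ] [Fintype γ']
    {p : (∀ i, 𝒳 i) → ℝ} (hnn : ∀ x, 0 ≤ p x) (hsum : ∑ x : ∀ i, 𝒳 i, p x = 1)
    (f : (∀ i, 𝒳 i) → β) (u : (∀ i, 𝒳 i) → γ) (u' : (∀ i, 𝒳 i) → γ') (τ : γ → γ')
    (hτ : ∀ x, u' x = τ (u x)) :
    condEnt p f u ≤ condEnt p f u' := by
  have h1 : condEnt p f (fun x => ((τ (u x), u x) : γ' × γ)) = condEnt p f u :=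
    condEnt_comp_inj p f u (fun b => (τ b, b))
      (fun b b' hb => congrArg Prod.snd hb)
  have h2 : condEnt p f (fun x => ((u' x, u x) : γ' × γ)) ≤ condEnt p f u' :=
    (condEnt_pair_le_and_eq hnn hsum f u' u).1
  have h3 : (fun x => ((τ (u x), u x) : γ' × γ)) = fun x => (u' x, u x) := by
    funext x
    rw [hτ x]
  rw [h3] at h1
  linarith

lemma condEnt_congr_comp {β γ γ' : Type*} [Fintype β] [Fintype γ] [Fintype γ']
    {p : (∀ i, 𝒳 i) → ℝ} (hnn : ∀ x, 0 ≤ p x) (hsum : ∑ x : ∀ i, 𝒳 i, p x = 1)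
    (f : (∀ i, 𝒳 i) → β) (u : (∀ i, 𝒳 i) → γ) (u' : (∀ i, 𝒳 i) → γ')
    (τ : γ → γ') (τ' : γ' → γ) (hτ : ∀ x, u' x = τ (u x)) (hτ' : ∀ x, u x = τ' (u' x)) :
    condEnt p f u = condEnt p f u' :=
  le_antisymm (condEnt_le_of_comp hnn hsum f u u' τ hτ)
    (condEnt_le_of_comp hnn hsum f u' u τ' hτ')

end AuxEnt
section AuxMask

variable {𝒳 : Fin N → Type*} [∀ i, Fintype (𝒳 i)]

/-- Masked restriction: the configuration `x` restricted to `A`, as an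
`Option`-valued full configuration. -/
def maskf {𝒳 : Fin N → Type*} (A : Finset (Fin N)) (x : ∀ i, 𝒳 i) : ∀ j, Option (𝒳 j) :=
  fun j => if j ∈ A then some (x j) else none

lemma maskf_eq_iff {𝒳 : Fin N → Type*} {A : Finset (Fin N)} {x x' : ∀ i, 𝒳 i} :
    maskf A x = maskf A x' ↔ ∀ j ∈ A, x j = x' j := by
  constructor
  · intro h j hj
    have h2 := congrFun h j
    simp only [maskf, if_pos hj] at h2
    exact Option.some_injective _ h2
  · intro h
    funext j
    unfold maskf
    by_cases hj : j ∈ A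
    · rw [if_pos hj, if_pos hj, h j hj]
    · rw [if_neg hj, if_neg hj]

lemma restr_eq_iff {𝒳 : Fin N → Type*} {A : Finset (Fin N)} {x x' : ∀ i, 𝒳 i} :
    restr A x = restr A x' ↔ ∀ j ∈ A, x j = x' j := by
  constructor
  · intro h j hj
    exact congrFun h ⟨j, hj⟩
  · intro h
    funext jh
    exact h jh.1 jh.2

lemma margin_eq_dist_maskf (p : (∀ i, 𝒳 i) → ℝ) (A : Finset (Fin N)) (x : ∀ i, 𝒳 i) :
    margin p A x = dist p (maskf A) (maskf A x) :=
  dist_congr' p fun x' => Iff.trans restr_eq_iff maskf_eq_iff.symm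

lemma condEnt_restr_eq_maskf {𝒵 : Fin N → Type*} [∀ j, Fintype (𝒵 j)]
    [∀ j, Nonempty (𝒵 j)] {β : Type*} [Fintype β]
    {p : (∀ i, 𝒳 i) → ℝ} (hnn : ∀ x, 0 ≤ p x) (hsum : ∑ x : ∀ i, 𝒳 i, p x = 1)
    (f : (∀ i, 𝒳 i) → β) (A : Finset (Fin N)) (Y : (∀ i, 𝒳 i) → ∀ j, 𝒵 j) :
    condEnt p f (fun x => restr A (Y x)) = condEnt p f (fun x => maskf A (Y x)) := by
  refine condEnt_congr_comp hnn hsum f _ _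
    (fun c => fun j => if hj : j ∈ A then some (c ⟨j, hj⟩) else none)
    (fun dm => fun jh => (dm jh.1).getD (Classical.arbitrary _)) ?_ ?_
  · intro x
    funext j
    by_cases hj : j ∈ A
    · simp [maskf, hj, restr]
    · simp [maskf, hj]
  · intro x
    funext jh
    simp [maskf, restr, jh.2]

/-- The MRF property yields the cross-multiplied conditional independence of
`X_i` and `X_{V∖{i}}` given `X_{N_i}`, in `dist`/`maskf` form. -/
lemma mrf_fact {G : SimpleGraph (Fin N)} {p : (∀ i, 𝒳 i) → ℝ} (hMRF : IsMRF G p) (i : Fin N) :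
    ∀ (a : 𝒳 i) (c d : ∀ j, Option (𝒳 j)),
      dist p (fun x => (x i, maskf (nbr G i) x, maskf (Finset.univ.erase i) x)) (a, c, d)
          * dist p (fun x => maskf (nbr G i) x) c
        = dist p (fun x => (x i, maskf (nbr G i) x)) (a, c)
          * dist p (fun x => (maskf (nbr G i) x, maskf (Finset.univ.erase i) x)) (c, d) := by
  intro a c d
  have hsub : nbr G i ⊆ Finset.univ.erase i := by
    intro j hj
    rw [nbr, Finset.mem_filter] at hj
    exact Finset.mem_erase.mpr ⟨hj.2.ne', Finset.mem_univ j⟩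
  have hne : ∀ j ∈ nbr G i, j ≠ i := fun j hj => (Finset.mem_erase.mp (hsub hj)).1
  by_cases hex : ∃ x₀ : ∀ j, 𝒳 j, x₀ i = a ∧ maskf (nbr G i) x₀ = c
      ∧ maskf (Finset.univ.erase i) x₀ = d
  · obtain ⟨x₀, hx1, hx2, hx3⟩ := hex
    have huniq : ∀ x : ∀ j, 𝒳 j,
        (x i = a ∧ maskf (nbr G i) x = c ∧ maskf (Finset.univ.erase i) x = d) ↔ x = x₀ := by
      intro x
      constructor
      · rintro ⟨h1, h2, h3⟩
        funext j
        by_cases hj : j = i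
        · subst hj; rw [h1, hx1]
        · exact maskf_eq_iff.mp (h3.trans hx3.symm) j
            (Finset.mem_erase.mpr ⟨hj, Finset.mem_univ j⟩)
      · rintro rfl
        exact ⟨hx1, hx2, hx3⟩
    have e0 : dist p (fun x => (x i, maskf (nbr G i) x, maskf (Finset.univ.erase i) x))
        (a, c, d) = p x₀ := by
      have h1 : dist p (fun x => (x i, maskf (nbr G i) x, maskf (Finset.univ.erase i) x))
          (a, c, d) = dist p (fun x => x) x₀ :=
        dist_congr' p fun x => by
          rw [Prod.mk.injEq, Prod.mk.injEq, ← and_assoc]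
          rw [and_assoc]
          exact huniq x
      rw [h1]
      unfold _root_.dist
      refine (Finset.sum_eq_single_of_mem x₀ (Finset.mem_univ _) ?_).trans ?_
      · intro b _ hb
        exact if_neg hb
      · exact if_pos rfl
    have e4 : dist p (fun x => maskf (nbr G i) x) c = margin p (nbr G i) x₀ := by
      rw [margin_eq_dist_maskf, ← hx2]
    have e2 : dist p (fun x => (x i, maskf (nbr G i) x)) (a, c)
        = margin p (insert i (nbr G i)) x₀ := by
      rw [margin_eq_dist_maskf]
      refine dist_congr' p fun x => ?_
      rw [Prod.mk.injEq, maskf_eq_iff]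
      constructor
      · rintro ⟨h1, h2⟩ j hj
        rcases Finset.mem_insert.mp hj with rfl | hj'
        · rw [h1, hx1]
        · exact maskf_eq_iff.mp (h2.trans hx2.symm) j hj'
      · intro hall
        constructor
        · rw [hall i (Finset.mem_insert_self i _), hx1]
        · rw [← hx2]
          exact maskf_eq_iff.mpr fun j hj => hall j (Finset.mem_insert_of_mem hj)
    have e3 : dist p (fun x => (maskf (nbr G i) x, maskf (Finset.univ.erase i) x)) (c, d)
        = margin p (Finset.univ.erase i) x₀ := by
      rw [margin_eq_dist_maskf]
      refine dist_congr' p fun x => ?_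
      rw [Prod.mk.injEq]
      constructor
      · rintro ⟨h1, h2⟩
        exact h2.trans hx3.symm
      · intro hall
        have her : ∀ j ∈ Finset.univ.erase i, x j = x₀ j :=
          maskf_eq_iff.mp hall
        constructor
        · rw [← hx2]
          exact maskf_eq_iff.mpr fun j hj => her j (hsub hj)
        · exact hall.trans hx3
    rw [e0, e4, e2, e3, hMRF i x₀]
    ring
  · have hL : dist p (fun x => (x i, maskf (nbr G i) x, maskf (Finset.univ.erase i) x))
        (a, c, d) = 0 := by
      by_contra hc
      obtain ⟨x, hx⟩ := exists_of_dist_ne_zero hc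
      rw [Prod.mk.injEq, Prod.mk.injEq] at hx
      exact hex ⟨x, hx.1, hx.2.1, hx.2.2⟩
    have hR : dist p (fun x => (maskf (nbr G i) x, maskf (Finset.univ.erase i) x)) (c, d)
        = 0 := by
      by_contra hc
      obtain ⟨x₂, hx⟩ := exists_of_dist_ne_zero hc
      rw [Prod.mk.injEq] at hx
      refine hex ⟨Function.update x₂ i a, Function.update_self i a x₂, ?_, ?_⟩
      · rw [← hx.1]
        exact maskf_eq_iff.mpr fun j hj => Function.update_of_ne (hne j hj) a x₂
      · rw [← hx.2]
        exact maskf_eq_iff.mpr fun j hj =>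
          Function.update_of_ne (Finset.mem_erase.mp hj).1 a x₂
    rw [hL, hR]
    ring

lemma dist_fiber_pair {β β' γ : Type*} [Fintype β] (p : (∀ i, 𝒳 i) → ℝ)
    (ρ : β → β') (fX : (∀ i, 𝒳 i) → β) (h : (∀ i, 𝒳 i) → γ) (a' : β') (c : γ) :
    dist p (fun x => (ρ (fX x), h x)) (a', c)
      = ∑ a : β, if ρ a = a' then dist p (fun x => (fX x, h x)) (a, c) else 0 := by
  unfold _root_.dist
  simp only [ite_sum_zero]
  rw [Finset.sum_comm]
  refine Finset.sum_congr rfl fun x _ => ?_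
  refine ((Finset.sum_eq_single_of_mem (fX x) (Finset.mem_univ _) ?_).trans ?_).symm
  · intro b _ hb
    by_cases hρ : ρ b = a'
    · rw [if_pos hρ, if_neg]
      intro hcon
      rw [Prod.mk.injEq] at hcon
      exact hb hcon.1.symm
    · rw [if_neg hρ]
  · by_cases hρ : ρ (fX x) = a' <;> by_cases hc : h x = c <;>
      simp [Prod.ext_iff, hρ, hc]

lemma dist_fiber_triple {β β' γ δ : Type*} [Fintype β] (p : (∀ i, 𝒳 i) → ℝ)
    (ρ : β → β') (fX : (∀ i, 𝒳 i) → β) (h : (∀ i, 𝒳 i) → γ) (k : (∀ i, 𝒳 i) → δ)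
    (a' : β') (c : γ) (d : δ) :
    dist p (fun x => (ρ (fX x), h x, k x)) (a', c, d)
      = ∑ a : β, if ρ a = a' then dist p (fun x => (fX x, h x, k x)) (a, c, d) else 0 := by
  unfold _root_.dist
  simp only [ite_sum_zero]
  rw [Finset.sum_comm]
  refine Finset.sum_congr rfl fun x _ => ?_
  refine ((Finset.sum_eq_single_of_mem (fX x) (Finset.mem_univ _) ?_).trans ?_).symm
  · intro b _ hb
    by_cases hρ : ρ b = a'
    · rw [if_pos hρ, if_neg]
      intro hcon
      rw [Prod.mk.injEq] at hcon
      exact hb hcon.1.symm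
    · rw [if_neg hρ]
  · by_cases hρ : ρ (fX x) = a' <;> by_cases hc : h x = c <;> by_cases hd : k x = d <;>
      simp [Prod.ext_iff, hρ, hc, hd]

/-- Conditional independence is preserved by mapping the first variable. -/
lemma fact_comp_left {β β' γ δ : Type*} [Fintype β] (p : (∀ i, 𝒳 i) → ℝ)
    (ρ : β → β') (fX : (∀ i, 𝒳 i) → β) (h : (∀ i, 𝒳 i) → γ) (k : (∀ i, 𝒳 i) → δ)
    (hfact : ∀ (a : β) (c : γ) (d : δ),
      dist p (fun x => (fX x, h x, k x)) (a, c, d) * dist p h c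
        = dist p (fun x => (fX x, h x)) (a, c) * dist p (fun x => (h x, k x)) (c, d)) :
    ∀ (a' : β') (c : γ) (d : δ),
      dist p (fun x => (ρ (fX x), h x, k x)) (a', c, d) * dist p h c
        = dist p (fun x => (ρ (fX x), h x)) (a', c)
          * dist p (fun x => (h x, k x)) (c, d) := by
  intro a' c d
  rw [dist_fiber_triple, dist_fiber_pair, Finset.sum_mul, Finset.sum_mul]
  refine Finset.sum_congr rfl fun a _ => ?_
  by_cases hρ : ρ a = a'
  · rw [if_pos hρ, if_pos hρ]
    exact hfact a c d
  · rw [if_neg hρ, if_neg hρ]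
    ring

end AuxMask
/-- **Proposition 2.** If `X` is a MRF on `𝒢` and for every vertex
`i` one has `H(Y_i | Y_{N_i}) = H(Y_i | X_{N_i})`, then `Y = (g_i(X_i), i ∈ V)`
is a MRF on `𝒢`. -/
theorem lumpable_of_condEnt_eq {𝒳 𝒴 : Fin N → Type*}
    [∀ i, Fintype (𝒳 i)] [∀ i, Fintype (𝒴 i)]
    (G : SimpleGraph (Fin N)) (p : (∀ i, 𝒳 i) → ℝ)
    (hnn : ∀ x, 0 ≤ p x) (hsum : ∑ x : ∀ i, 𝒳 i, p x = 1)
    (hMRF : IsMRF G p)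
    (g : ∀ i, 𝒳 i → 𝒴 i)
    (hIT : ∀ i : Fin N,
      condEnt p (fun x => g i (x i)) (fun x => restr (nbr G i) (gmap g x))
        = condEnt p (fun x => g i (x i)) (restr (nbr G i))) :
    IsMRF G (dist p (gmap g)) := by
  intro i y
  have hΩ : Nonempty (∀ j, 𝒳 j) := by
    by_contra hc
    rw [not_nonempty_iff] at hc
    rw [Finset.univ_eq_empty, Finset.sum_empty] at hsum
    exact one_ne_zero hsum.symm
  obtain ⟨x₀⟩ := hΩ
  have hXne : ∀ j, Nonempty (𝒳 j) := fun j => ⟨x₀ j⟩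
  have hYne : ∀ j, Nonempty (𝒴 j) := fun j => ⟨g j (x₀ j)⟩
  have hsub : nbr G i ⊆ Finset.univ.erase i := by
    intro j hj
    rw [nbr, Finset.mem_filter] at hj
    exact Finset.mem_erase.mpr ⟨hj.2.ne', Finset.mem_univ j⟩
  set nb := nbr G i with hnbdef
  set er := Finset.univ.erase i with herdef
  have hφ : ∀ (A : Finset (Fin N)) (x : ∀ j, 𝒳 j),
      maskf A (gmap g x) = (fun j => Option.map (g j) (maskf A x j)) := by
    intro A x
    funext j
    by_cases hj : j ∈ A <;> simp [maskf, hj, gmap]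
  -- X-side factorization, then pushed through `g i`
  have hXfact := mrf_fact hMRF i
  have hAfact := fact_comp_left p (g i) (fun x => x i)
    (fun x => maskf nb x) (fun x => maskf er x) hXfact
  have h4 : condEnt p (fun x => g i (x i)) (fun x => (maskf nb x, maskf er x))
      = condEnt p (fun x => g i (x i)) (fun x => maskf nb x) :=
    (condEnt_pair_le_and_eq hnn hsum _ _ _).2.mpr hAfact
  have hIT' : condEnt p (fun x => g i (x i)) (fun x => maskf nb (gmap g x))
      = condEnt p (fun x => g i (x i)) (fun x => maskf nb x) := by
    have l1 := condEnt_restr_eq_maskf (𝒵 := 𝒴) hnn hsum (fun x => g i (x i)) nb (gmap g)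
    have l2 := condEnt_restr_eq_maskf (𝒵 := 𝒳) hnn hsum (fun x => g i (x i)) nb
      (fun x => x)
    exact (l1.symm.trans (hIT i)).trans l2
  have i1 := (condEnt_pair_le_and_eq hnn hsum (fun x => g i (x i))
    (fun x => maskf nb (gmap g x)) (fun x => maskf er (gmap g x))).1
  have i2 : condEnt p (fun x => g i (x i)) (fun x => (maskf nb x, maskf er (gmap g x)))
      ≤ condEnt p (fun x => g i (x i))
          (fun x => (maskf nb (gmap g x), maskf er (gmap g x))) := by
    refine condEnt_le_of_comp hnn hsum _ _ _
      (Prod.map (fun cm => fun j => Option.map (g j) (cm j)) id) ?_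
    intro x
    show (maskf nb (gmap g x), maskf er (gmap g x)) = _
    rw [Prod.map_apply]
    refine Prod.ext ?_ ?_
    · exact hφ nb x
    · rfl
  have i3 : condEnt p (fun x => g i (x i)) (fun x => (maskf nb x, maskf er x))
      ≤ condEnt p (fun x => g i (x i)) (fun x => (maskf nb x, maskf er (gmap g x))) := by
    refine condEnt_le_of_comp hnn hsum _ _ _
      (Prod.map id (fun cm => fun j => Option.map (g j) (cm j))) ?_
    intro x
    show (maskf nb x, maskf er (gmap g x)) = _
    rw [Prod.map_apply]
    refine Prod.ext ?_ ?_
    · rfl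
    · exact hφ er x
  have heq : condEnt p (fun x => g i (x i))
      (fun x => (maskf nb (gmap g x), maskf er (gmap g x)))
      = condEnt p (fun x => g i (x i)) (fun x => maskf nb (gmap g x)) :=
    le_antisymm i1 (by linarith)
  have hYfact := (condEnt_pair_le_and_eq hnn hsum (fun x => g i (x i))
    (fun x => maskf nb (gmap g x)) (fun x => maskf er (gmap g x))).2.mp heq
  have key := hYfact (y i) (maskf nb y) (maskf er y)
  have c1 : dist p (fun x => (g i (x i), maskf nb (gmap g x), maskf er (gmap g x)))
      (y i, maskf nb y, maskf er y) = dist p (gmap g) y := by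
    refine dist_congr' p fun x => ?_
    rw [Prod.mk.injEq, Prod.mk.injEq]
    constructor
    · rintro ⟨h1, h2, h3⟩
      funext j
      by_cases hj : j = i
      · subst hj; exact h1
      · exact maskf_eq_iff.mp h3 j (Finset.mem_erase.mpr ⟨hj, Finset.mem_univ j⟩)
    · intro h
      exact ⟨congrFun h i, by rw [h], by rw [h]⟩
  have c2 : dist p (fun x => maskf nb (gmap g x)) (maskf nb y)
      = margin (dist p (gmap g)) nb y := by
    rw [margin_eq_dist_maskf, dist_dist]
  have c3 : dist p (fun x => (g i (x i), maskf nb (gmap g x))) (y i, maskf nb y)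
      = margin (dist p (gmap g)) (insert i nb) y := by
    rw [margin_eq_dist_maskf, dist_dist]
    refine dist_congr' p fun x => ?_
    rw [Prod.mk.injEq]
    constructor
    · rintro ⟨h1, h2⟩
      refine maskf_eq_iff.mpr fun j hj => ?_
      rcases Finset.mem_insert.mp hj with rfl | hj'
      · exact h1
      · exact maskf_eq_iff.mp h2 j hj'
    · intro h
      have hall := maskf_eq_iff.mp h
      exact ⟨hall i (Finset.mem_insert_self i _),
        maskf_eq_iff.mpr fun j hj => hall j (Finset.mem_insert_of_mem hj)⟩
  have c4 : dist p (fun x => (maskf nb (gmap g x), maskf er (gmap g x)))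
      (maskf nb y, maskf er y) = margin (dist p (gmap g)) er y := by
    rw [margin_eq_dist_maskf, dist_dist]
    refine dist_congr' p fun x => ?_
    rw [Prod.mk.injEq]
    constructor
    · rintro ⟨h1, h2⟩
      exact h2
    · intro h
      exact ⟨maskf_eq_iff.mpr fun j hj => maskf_eq_iff.mp h j (hsub hj), h⟩
  rw [c1, c2, c3, c4] at key
  rw [key]
  exact mul_comm _ _
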